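/- arXiv:1303.0919 — 2 statements merged into one kernel-verified Lean document; each statement's English description precedes it below -/
import Mathlib

section
/- Assume the labeled space (E,L,𝔅̄) is weakly left-resolving. For v ∈ Ω_0(E) and l ≥ 1, set X_l(v)=∩_{β∈L(E^{≤l}v)} r(β) and Y_l(v)=∪_{w∈X_l(v)} (L(E^{≤l}w)∖L(E^{≤l}v)), and assume (as proved in [BP2]) that [v]_l = X_l(v) ∖ r(Y_l(v)) and [v]_l ∩ r(Y_l(v)) = ∅, where r(Y_l(v)) = ∪_{β∈Y_l(v)} r(β). Then for every labeled path α ∈ L*(E), r([v]_l, α) = r(X_l(v), α) ∖ r(r(Y_l(v)), α). -/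
/-! # Common framework for labeled graph C*-algebras

Directed graphs, finite paths, labeled spaces `(E, L, 𝔅̄)` where `𝔅̄` is the
smallest accommodating set closed under relative complements (and containing
the sink parts of its members), loops and generalized loops, representations
of labeled spaces in C*-algebras, gauge actions, infinite projections,
AF algebras, and closed two-sided ideals. -/

noncomputable section

/-- A directed graph with vertex set `V` and edge set `E`. -/
structure DirGraph (V : Type*) (E : Type*) where
  src : E → V
  rng : E → V

variable {V E 𝒜 : Type*}

/-- A (finite) path of positive length in a directed graph: a nonempty list of
composable edges. -/
structure GPath (G : DirGraph V E) where
  edges : List E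
  ne : edges ≠ []
  chain : edges.Chain' fun e f => G.rng e = G.src f

namespace GPath

variable {G : DirGraph V E}

/-- The source vertex of a path. -/
def source (p : GPath G) : V := G.src (p.edges.head p.ne)

/-- The range vertex of a path. -/
def range (p : GPath G) : V := G.rng (p.edges.getLast p.ne)

/-- The length of a path. -/
def length (p : GPath G) : ℕ := p.edges.length

/-- The label word of a path under a labeling `L`. -/
def label (L : E → 𝒜) (p : GPath G) : List 𝒜 := p.edges.map L

end GPath

/-- The set of sinks of a graph (vertices emitting no edge). -/
def DirGraph.sinks (G : DirGraph V E) : Set V := {v | ∀ e, G.src e ≠ v}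

/-- `w ∈ L*(E)`: `w` is the label of some path of positive length. -/
def IsLabelWord (G : DirGraph V E) (L : E → 𝒜) (w : List 𝒜) : Prop :=
  ∃ p : GPath G, p.label L = w

/-- The range `r(w)` of a labeled path `w`. -/
def rngW (G : DirGraph V E) (L : E → 𝒜) (w : List 𝒜) : Set V :=
  {v | ∃ p : GPath G, p.label L = w ∧ p.range = v}

/-- The relative range `r(A, w)` of a labeled path `w` with respect to `A`. -/
def relRng (G : DirGraph V E) (L : E → 𝒜) (A : Set V) (w : List 𝒜) : Set V :=
  {v | ∃ p : GPath G, p.label L = w ∧ p.source ∈ A ∧ p.range = v}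

/-- `L(A E^n)`: labels of paths of length exactly `n` with source in `A`. -/
def labelsFromLen (G : DirGraph V E) (L : E → 𝒜) (A : Set V) (n : ℕ) : Set (List 𝒜) :=
  {w | ∃ p : GPath G, p.source ∈ A ∧ p.length = n ∧ p.label L = w}

/-- `L(A E^{≤n})`: labels of paths of length between `1` and `n` with source in `A`. -/
def labelsFromLe (G : DirGraph V E) (L : E → 𝒜) (A : Set V) (n : ℕ) : Set (List 𝒜) :=
  {w | ∃ p : GPath G, p.source ∈ A ∧ p.length ≤ n ∧ p.label L = w}

/-- `L(A E^{≥n})`: labels of paths of length at least `n` (and at least `1`)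
with source in `A`. -/
def labelsFromGe (G : DirGraph V E) (L : E → 𝒜) (A : Set V) (n : ℕ) : Set (List 𝒜) :=
  {w | ∃ p : GPath G, p.source ∈ A ∧ n ≤ p.length ∧ p.label L = w}

/-- `L(E^n A)`: labels of paths of length exactly `n` with range in `A`. -/
def labelsToLen (G : DirGraph V E) (L : E → 𝒜) (n : ℕ) (A : Set V) : Set (List 𝒜) :=
  {w | ∃ p : GPath G, p.range ∈ A ∧ p.length = n ∧ p.label L = w}

/-- `L(E^{≤l} v)`: labels of paths of length between `1` and `l` with range `v`. -/
def labelsToLe (G : DirGraph V E) (L : E → 𝒜) (l : ℕ) (v : V) : Set (List 𝒜) :=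
  {w | ∃ p : GPath G, p.range = v ∧ p.length ≤ l ∧ p.label L = w}

/-- `𝔅̄`: the smallest accommodating set for `(E, L)` (containing the ranges
`r(α)` for `α ∈ L*(E)` and closed under relative ranges, finite intersections
and finite unions) that is moreover closed under relative complements and
contains `A_sk = A ∩ sinks` for every `A` belonging to it. -/
inductive Bbar (G : DirGraph V E) (L : E → 𝒜) : Set V → Prop
  | base (w : List 𝒜) (hw : IsLabelWord G L w) : Bbar G L (rngW G L w)
  | rel (A : Set V) (w : List 𝒜) (hA : Bbar G L A) (hw : IsLabelWord G L w) :
      Bbar G L (relRng G L A w)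
  | inter (A B : Set V) (hA : Bbar G L A) (hB : Bbar G L B) : Bbar G L (A ∩ B)
  | union (A B : Set V) (hA : Bbar G L A) (hB : Bbar G L B) : Bbar G L (A ∪ B)
  | diff (A B : Set V) (hA : Bbar G L A) (hB : Bbar G L B) : Bbar G L (A \ B)
  | sk (A : Set V) (hA : Bbar G L A) : Bbar G L (A ∩ G.sinks)

/-- The standing assumptions on a labeled space `(E, L, 𝔅̄)`: weakly
left-resolving, set-finite, receiver set-finite, and no sink is a source. -/
structure StandingAssumptions (G : DirGraph V E) (L : E → 𝒜) : Prop where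
  wlr : ∀ A B : Set V, Bbar G L A → Bbar G L B → ∀ w : List 𝒜, IsLabelWord G L w →
    relRng G L A w ∩ relRng G L B w = relRng G L (A ∩ B) w
  setFinite : ∀ A : Set V, Bbar G L A → ∀ n : ℕ, 1 ≤ n → (labelsFromLen G L A n).Finite
  receiverSetFinite : ∀ A : Set V, Bbar G L A → ∀ n : ℕ, 1 ≤ n → (labelsToLen G L n A).Finite
  sinkNotSource : ∀ v ∈ G.sinks, ∃ e, G.rng e = v

/-- The `n`-fold concatenation `w^n` of a word `w`. -/
def wordPow (w : List 𝒜) (n : ℕ) : List 𝒜 := (List.replicate n w).flatten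

/-- A labeled path is repeatable if all its powers `w^n`, `n ≥ 1`, are again
labeled paths. -/
def Repeatable (G : DirGraph V E) (L : E → 𝒜) (w : List 𝒜) : Prop :=
  ∀ n : ℕ, 1 ≤ n → IsLabelWord G L (wordPow w n)

/-- The generalized vertex `[v]_l`: all non-source vertices receiving exactly
the same labeled paths of length at most `l` as `v` does. -/
def gvtx (G : DirGraph V E) (L : E → 𝒜) (l : ℕ) (v : V) : Set V :=
  {u | (∃ e, G.rng e = u) ∧ labelsToLe G L l u = labelsToLe G L l v}

/-- A generalized loop at `A`: a labeled path `α ∈ L(A E^{≥1} A)`. -/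
def IsGenLoop (G : DirGraph V E) (L : E → 𝒜) (A : Set V) (α : List 𝒜) : Prop :=
  ∃ p : GPath G, p.label L = α ∧ p.source ∈ A ∧ p.range ∈ A

/-- A loop at `A`: a generalized loop `α` at `A` such that `A ⊆ r(A, α)`. -/
def IsLoop (G : DirGraph V E) (L : E → 𝒜) (A : Set V) (α : List 𝒜) : Prop :=
  IsGenLoop G L A α ∧ A ⊆ relRng G L A α

/-- The nonempty initial segments (initial paths) of a word `α`. -/
def initialSegs (α : List 𝒜) : Set (List 𝒜) := {w | w ≠ [] ∧ w <+: α}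

/-- A loop `α` at `A` has an exit if (i) the initial segments of `α` form a
proper subset of `L(A E^{≤|α|})`, or (ii) `r(A, α_{[1,i]})` contains a sink for
some `1 ≤ i ≤ |α|`, or (iii) `A` is a proper subset of `r(A, α)`. -/
def HasExitLoop (G : DirGraph V E) (L : E → 𝒜) (A : Set V) (α : List 𝒜) : Prop :=
  initialSegs α ⊂ labelsFromLe G L A α.length ∨
  (∃ k : ℕ, 1 ≤ k ∧ k ≤ α.length ∧ (relRng G L A (α.take k) ∩ G.sinks).Nonempty) ∨
  A ⊂ relRng G L A α

/-- `A_0 E^{≤K} A_1 ⋯ E^{≤K} A_m ≠ ∅`: existence of `m` consecutively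
composable paths, each of length between `1` and `K`, the `j`-th going from
`As j` to `As (j+1)`. -/
def ChainExists (G : DirGraph V E) (As : ℕ → Set V) (K m : ℕ) : Prop :=
  ∃ xs : Fin m → GPath G,
    (∀ j : Fin m, (xs j).length ≤ K ∧ (xs j).source ∈ As j.val ∧
      (xs j).range ∈ As (j.val + 1)) ∧
    ∀ (j : ℕ) (h : j + 1 < m),
      (xs ⟨j, Nat.lt_of_succ_lt h⟩).range = (xs ⟨j + 1, h⟩).source

/-- Same as `ChainExists` but with all paths of length exactly `K`
(i.e. `A_0 E^K A_1 ⋯ E^K A_m ≠ ∅`). -/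
def ChainExistsExact (G : DirGraph V E) (As : ℕ → Set V) (K m : ℕ) : Prop :=
  ∃ xs : Fin m → GPath G,
    (∀ j : Fin m, (xs j).length = K ∧ (xs j).source ∈ As j.val ∧
      (xs j).range ∈ As (j.val + 1)) ∧
    ∀ (j : ℕ) (h : j + 1 < m),
      (xs ⟨j, Nat.lt_of_succ_lt h⟩).range = (xs ⟨j + 1, h⟩).source

/-- Condition (a): for every finite family `A_1, …, A_N` in `𝔅̄` and every
`K ≥ 1` there is `m₀ ≥ 1` such that
`A_{i_1} E^{≤K} A_{i_2} ⋯ E^{≤K} A_{i_n} = ∅` (`n` sets, `n - 1` path factors)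
for all `n > m₀` and all choices of indices. -/
def CondA (G : DirGraph V E) (L : E → 𝒜) : Prop :=
  ∀ (N : ℕ) (As : Fin N → Set V), (∀ i, Bbar G L (As i)) → ∀ K : ℕ, 1 ≤ K →
    ∃ m0 : ℕ, 1 ≤ m0 ∧ ∀ n : ℕ, m0 < n → ∀ ι : ℕ → Fin N,
      ¬ ChainExists G (fun j => As (ι j)) K (n - 1)

/-- A word is agreeable (for level `l`) if it is of the form `β^k β'` with
`β, β' ∈ L(E^{≤l})` and `β'` a nonempty initial segment of `β`. -/
def AgreeableW (G : DirGraph V E) (L : E → 𝒜) (l : ℕ) (α : List 𝒜) : Prop :=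
  ∃ (k : ℕ) (β β' : List 𝒜), IsLabelWord G L β ∧ IsLabelWord G L β' ∧
    β.length ≤ l ∧ β' ≠ [] ∧ β' <+: β ∧ α = wordPow β k ++ β'

/-- A representation of the labeled space `(E, L, 𝔅̄)` in a (C*-)algebra `B`:
projections `p A`, `A ∈ 𝔅̄`, and partial isometries `s a`, `a ∈ 𝒜`, satisfying
the defining relations of a labeled graph C*-algebra. -/
structure LRep (G : DirGraph V E) (L : E → 𝒜) (B : Type*)
    [NonUnitalRing B] [StarRing B] where
  p : Set V → B
  s : 𝒜 → B
  p_empty : p ∅ = 0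
  p_sa : ∀ A : Set V, Bbar G L A → star (p A) = p A
  p_mul : ∀ A A' : Set V, Bbar G L A → Bbar G L A' → p A * p A' = p (A ∩ A')
  p_union : ∀ A A' : Set V, Bbar G L A → Bbar G L A' →
    p (A ∪ A') = p A + p A' - p (A ∩ A')
  s_pi : ∀ a : 𝒜, s a * star (s a) * s a = s a
  p_s : ∀ (A : Set V) (a : 𝒜), Bbar G L A → p A * s a = s a * p (relRng G L A [a])
  s_s : ∀ a : 𝒜, star (s a) * s a = p (rngW G L [a])
  s_orth : ∀ a b : 𝒜, a ≠ b → star (s a) * s b = 0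
  ck : ∀ A : Set V, Bbar G L A →
    p A = (∑ᶠ a ∈ {a : 𝒜 | ∃ e, G.src e ∈ A ∧ L e = a},
      s a * p (relRng G L A [a]) * star (s a)) + p (A ∩ G.sinks)

/-- `s_α` for a word `α`: the product of the partial isometries of its letters
(junk value `0` on the empty word, which is never used). -/
def sWord {B : Type*} [NonUnitalRing B] (s : 𝒜 → B) : List 𝒜 → B
  | [] => 0
  | [a] => s a
  | a :: b :: w => s a * sWord s (b :: w)

/-- The range of a word in `L^#(E)` (`none` is the empty word, with range all
of `E^0`). -/
def owordRng (G : DirGraph V E) (L : E → 𝒜) : Option (List 𝒜) → Set V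
  | none => Set.univ
  | some w => rngW G L w

/-- The relative range of a word in `L^#(E)` with respect to `A` (`none` is
the empty word, with `r(A, ε) = A`). -/
def relRngE (G : DirGraph V E) (L : E → 𝒜) (A : Set V) : Option (List 𝒜) → Set V
  | none => A
  | some w => relRng G L A w

/-- The element `s_α p_A s_β*` of a representation, where `α`, `β` are words in
`L^#(E)` (`none` being the empty word `ε` with `s_ε` the identity). -/
def LRep.elt {B : Type*} [NonUnitalRing B] [StarRing B] {G : DirGraph V E} {L : E → 𝒜}
    (rep : LRep G L B) : Option (List 𝒜) → Set V → Option (List 𝒜) → B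
  | none, A, none => rep.p A
  | some α, A, none => sWord rep.s α * rep.p A
  | none, A, some β => rep.p A * star (sWord rep.s β)
  | some α, A, some β => sWord rep.s α * rep.p A * star (sWord rep.s β)

/-- A projection `q` is infinite if there is a partial isometry `u` with
`u* u = q`, `u u* ≤ q` and `u u* ≠ q`. -/
def IsInfiniteProjection (B : Type*) [NonUnitalRing B] [StarRing B] [PartialOrder B]
    (q : B) : Prop :=
  star q = q ∧ q * q = q ∧ ∃ u : B, star u * u = q ∧ u * star u ≤ q ∧ u * star u ≠ q

/-- A C*-algebra is AF if every finite subset can be approximated within any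
`ε > 0` from a finite-dimensional *-subalgebra. -/
def IsAFAlgebra (B : Type*) [NonUnitalNormedRing B] [StarRing B] [NormedSpace ℂ B] : Prop :=
  ∀ (F : Finset B) (ε : ℝ), 0 < ε →
    ∃ D : NonUnitalStarSubalgebra ℂ B, FiniteDimensional ℂ D ∧
      ∀ x ∈ F, ∃ y ∈ (D : Set B), ‖x - y‖ < ε

/-- A gauge action for a representation: a strongly continuous action of the
circle group by *-automorphisms fixing the projections and scaling the
generating partial isometries. -/
structure GaugeAction {B : Type*} [NonUnitalCStarAlgebra B]
    (G : DirGraph V E) (L : E → 𝒜) (rep : LRep G L B) where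
  γ : Circle → B ≃⋆ₐ[ℂ] B
  γ_mul : ∀ z w : Circle, γ (z * w) = (γ w).trans (γ z)
  γ_continuous : ∀ x : B, Continuous fun z => γ z x
  γ_s : ∀ (z : Circle) (a : 𝒜), γ z (rep.s a) = (z : ℂ) • rep.s a
  γ_p : ∀ (z : Circle) (A : Set V), Bbar G L A → γ z (rep.p A) = rep.p A

/-- The representation generates `B` as a C*-algebra. -/
def GeneratesAlg {B : Type*} [NonUnitalCStarAlgebra B]
    (G : DirGraph V E) (L : E → 𝒜) (rep : LRep G L B) : Prop :=
  closure (NonUnitalStarAlgebra.adjoin ℂ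
    ({x : B | ∃ a : 𝒜, x = rep.s a} ∪ {x : B | ∃ A : Set V, Bbar G L A ∧ x = rep.p A}) : Set B)
    = Set.univ

/-- A closed two-sided ideal of a C*-algebra (as a set). -/
def IsClosedTwoSidedIdealSet (B : Type*) [NonUnitalNormedRing B] [NormedSpace ℂ B]
    (I : Set B) : Prop :=
  IsClosed I ∧ (0 : B) ∈ I ∧ (∀ x ∈ I, ∀ y ∈ I, x + y ∈ I) ∧
    (∀ (c : ℂ), ∀ x ∈ I, c • x ∈ I) ∧ ∀ x ∈ I, ∀ y : B, x * y ∈ I ∧ y * x ∈ I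

/-- The closed two-sided ideal generated by an element. -/
def closedIdealGen (B : Type*) [NonUnitalNormedRing B] [NormedSpace ℂ B] (q : B) : Set B :=
  ⋂₀ {I : Set B | IsClosedTwoSidedIdealSet B I ∧ q ∈ I}


section Aux

variable {V E 𝒜 : Type*} {G : DirGraph V E} {L : E → 𝒜}

lemma relRng_empty' (α : List 𝒜) : relRng G L (∅ : Set V) α = ∅ := by
  ext x; simp [relRng]

lemma bbar_finset_biInter (T : Finset (List 𝒜)) :
    T.Nonempty → (∀ β ∈ T, IsLabelWord G L β) → Bbar G L (⋂ β ∈ T, rngW G L β) := by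
  classical
  induction T using Finset.induction_on with
  | empty => exact fun hne _ => absurd hne (by simp)
  | @insert a s ha ih =>
    intro _ h
    rcases s.eq_empty_or_nonempty with rfl | hs
    · simpa using Bbar.base a (h a (by simp))
    · have : (⋂ β ∈ insert a s, rngW G L β) = rngW G L a ∩ ⋂ β ∈ s, rngW G L β := by
        simp
      rw [this]
      exact Bbar.inter _ _ (Bbar.base a (h a (by simp)))
        (ih hs fun β hβ => h β (Finset.mem_insert_of_mem hβ))

lemma bbar_finset_biUnion (T : Finset (List 𝒜)) {γ : List 𝒜} (hγ : IsLabelWord G L γ) :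
    (∀ β ∈ T, IsLabelWord G L β) → Bbar G L (⋃ β ∈ T, rngW G L β) := by
  classical
  induction T using Finset.induction_on with
  | empty =>
    intro _
    have : (⋃ β ∈ (∅ : Finset (List 𝒜)), rngW G L β) = rngW G L γ \ rngW G L γ := by
      simp
    rw [this]
    exact Bbar.diff _ _ (Bbar.base γ hγ) (Bbar.base γ hγ)
  | @insert a s ha ih =>
    intro h
    have : (⋃ β ∈ insert a s, rngW G L β) = rngW G L a ∪ ⋃ β ∈ s, rngW G L β := by
      simp
    rw [this]
    exact Bbar.union _ _ (Bbar.base a (h a (by simp)))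
      (ih fun β hβ => h β (Finset.mem_insert_of_mem hβ))

lemma bbar_biInter (S : Set (List 𝒜)) (hS : S.Finite) (hne : S.Nonempty)
    (h : ∀ β ∈ S, IsLabelWord G L β) : Bbar G L (⋂ β ∈ S, rngW G L β) := by
  have h1 : (⋂ β ∈ S, rngW G L β) = ⋂ β ∈ hS.toFinset, rngW G L β := by
    simp
  rw [h1]
  exact bbar_finset_biInter _ (by simpa using hne) (by simpa using h)

lemma bbar_biUnion (S : Set (List 𝒜)) (hS : S.Finite) {γ : List 𝒜}
    (hγ : IsLabelWord G L γ) (h : ∀ β ∈ S, IsLabelWord G L β) :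
    Bbar G L (⋃ β ∈ S, rngW G L β) := by
  have h1 : (⋃ β ∈ S, rngW G L β) = ⋃ β ∈ hS.toFinset, rngW G L β := by
    simp
  rw [h1]
  exact bbar_finset_biUnion _ hγ (by simpa using h)

end Aux

/-- key step of Proposition 2.3. If `(E, L, 𝔅̄)` is weakly
left-resolving and `[v]_l = X_l(v) ∖ r(Y_l(v))` with `[v]_l ∩ r(Y_l(v)) = ∅`,
then `r([v]_l, α) = r(X_l(v), α) ∖ r(r(Y_l(v)), α)` for every `α ∈ L*(E)`. -/
theorem relRng_gvtx_eq {V E 𝒜 : Type*} [Countable V] [Countable E] [Countable 𝒜]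
    (G : DirGraph V E) (L : E → 𝒜) (hL : Function.Surjective L)
    (sa : StandingAssumptions G L)
    (v : V) (hv : ∃ e, G.rng e = v) (l : ℕ) (hl : 1 ≤ l)
    (X : Set V) (hX : X = ⋂ β ∈ labelsToLe G L l v, rngW G L β)
    (rY : Set V)
    (hrY : rY = ⋃ β ∈ (⋃ u ∈ X, labelsToLe G L l u \ labelsToLe G L l v), rngW G L β)
    (hgv : gvtx G L l v = X \ rY)
    (hdisj : gvtx G L l v ∩ rY = ∅) :
    ∀ α : List 𝒜, IsLabelWord G L α →
      relRng G L (gvtx G L l v) α = relRng G L X α \ relRng G L rY α := by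
  -- a path of length 1 into `v`
  obtain ⟨e, he⟩ := hv
  let pe : GPath G := ⟨[e], by simp, List.isChain_singleton _⟩
  have hpe_range : pe.range = v := by simpa [GPath.range, pe] using he
  have hγ0 : ([L e]) ∈ labelsToLe G L l v :=
    ⟨pe, hpe_range, by simpa [GPath.length, pe] using hl, rfl⟩
  have hlw0 : IsLabelWord G L [L e] := ⟨pe, rfl⟩
  have hvmem : v ∈ rngW G L [L e] := ⟨pe, rfl, hpe_range⟩
  have hBA : Bbar G L (rngW G L [L e]) := Bbar.base _ hlw0
  have hone : ∀ p : GPath G, 1 ≤ p.length := fun p => List.length_pos_iff.mpr p.ne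
  -- `L(E^{≤l} v)` is finite
  have hSfin : (labelsToLe G L l v).Finite := by
    apply Set.Finite.subset (Set.Finite.biUnion (Set.finite_Icc 1 l)
      (fun n hn => sa.receiverSetFinite _ hBA n hn.1))
    rintro β ⟨p, hr, hlen, hlab⟩
    exact Set.mem_biUnion (Set.mem_Icc.mpr ⟨hone p, hlen⟩)
      ⟨p, by rw [hr]; exact hvmem, rfl, hlab⟩
  have hSlw : ∀ β ∈ labelsToLe G L l v, IsLabelWord G L β := by
    rintro β ⟨p, _, _, hlab⟩; exact ⟨p, hlab⟩
  -- `X ∈ 𝔅̄`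
  have hXB : Bbar G L X := by
    rw [hX]; exact bbar_biInter _ hSfin ⟨_, hγ0⟩ hSlw
  -- the index set `Y` of `rY` is finite, with label words as members
  set Y : Set (List 𝒜) := ⋃ u ∈ X, labelsToLe G L l u \ labelsToLe G L l v with hYdef
  have hYlw : ∀ β ∈ Y, IsLabelWord G L β := by
    rintro β hβ
    obtain ⟨u, _, hβu, _⟩ := Set.mem_iUnion₂.mp hβ
    obtain ⟨p, _, _, hlab⟩ := hβu
    exact ⟨p, hlab⟩
  have hYfin : Y.Finite := by
    apply Set.Finite.subset (Set.Finite.biUnion (Set.finite_Icc 1 l)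
      (fun n hn => sa.receiverSetFinite _ hXB n hn.1))
    rintro β hβ
    obtain ⟨u, hu, hβu, _⟩ := Set.mem_iUnion₂.mp hβ
    obtain ⟨p, hr, hlen, hlab⟩ := hβu
    exact Set.mem_biUnion (Set.mem_Icc.mpr ⟨hone p, hlen⟩)
      ⟨p, by rw [hr]; exact hu, rfl, hlab⟩
  -- `r(Y) ∈ 𝔅̄`
  have hrYB : Bbar G L rY := by
    rw [hrY]; exact bbar_biUnion _ hYfin hlw0 hYlw
  -- `[v]_l ∈ 𝔅̄`
  have hgB : Bbar G L (gvtx G L l v) := by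
    rw [hgv]; exact Bbar.diff _ _ hXB hrYB
  intro α hα
  -- weak left-resolving gives disjointness of relative ranges
  have key : relRng G L (gvtx G L l v) α ∩ relRng G L rY α = ∅ := by
    rw [sa.wlr _ _ hgB hrYB α hα, hdisj, relRng_empty']
  ext x
  constructor
  · rintro ⟨p, hlab, hsrc, hrng⟩
    refine ⟨⟨p, hlab, ?_, hrng⟩, ?_⟩
    · have := hgv ▸ hsrc; exact this.1
    · intro hx
      have : x ∈ relRng G L (gvtx G L l v) α ∩ relRng G L rY α :=
        ⟨⟨p, hlab, hsrc, hrng⟩, hx⟩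
      simp [key] at this
  · rintro ⟨⟨p, hlab, hsrc, hrng⟩, hnot⟩
    refine ⟨p, hlab, ?_, hrng⟩
    rw [hgv]
    refine ⟨hsrc, fun hmem => hnot ⟨p, hlab, hmem, hrng⟩⟩

end
end

section
/- Let {s_a, p_A} be a representation of the labeled space (E,L,𝔅̄) in a C*-algebra such that p_C ≠ 0 for every nonempty C ∈ 𝔅̄. If α is a loop at A ∈ 𝔅̄ that has an exit, then p_A is an infinite projection. -/
/-! # Common framework for labeled graph C*-algebras

Directed graphs, finite paths, labeled spaces `(E, L, 𝔅̄)` where `𝔅̄` is the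
smallest accommodating set closed under relative complements (and containing
the sink parts of its members), loops and generalized loops, representations
of labeled spaces in C*-algebras, gauge actions, infinite projections,
AF algebras, and closed two-sided ideals. -/

noncomputable section

variable {V E 𝒜 : Type*}

/-! ## Auxiliary lemmas -/

section AuxPaths

variable {V E 𝒜 : Type*} {G : DirGraph V E} {L : E → 𝒜}

lemma GPath.label_ne (p : GPath G) : p.label L ≠ [] := by
  simp [GPath.label, p.ne]

lemma GPath.label_length (p : GPath G) : (p.label L).length = p.edges.length := by
  simp [GPath.label]

/-- single-edge path -/
def GPath.single (G : DirGraph V E) (e : E) : GPath G :=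
  ⟨[e], by simp, List.isChain_singleton e⟩

lemma isLabelWord_single (hL : Function.Surjective L) (a : 𝒜) :
    IsLabelWord G L [a] := by
  obtain ⟨e, he⟩ := hL a
  exact ⟨GPath.single G e, by simp [GPath.label, GPath.single, he]⟩

lemma GPath.range_mem_rngW_last (p : GPath G) :
    p.range ∈ rngW G L [(p.label L).getLast (p.label_ne)] := by
  refine ⟨GPath.single G (p.edges.getLast p.ne), ?_, rfl⟩
  simp only [GPath.label, GPath.single, List.map_cons, List.map_nil]
  rw [List.getLast_map]

/-- composition of paths -/
lemma GPath.comp (p q : GPath G) (h : p.range = q.source) :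
    ∃ r : GPath G, r.label L = p.label L ++ q.label L ∧
      r.source = p.source ∧ r.range = q.range := by
  refine ⟨⟨p.edges ++ q.edges, by simp [p.ne], ?_⟩, ?_, ?_, ?_⟩
  · refine List.isChain_append.mpr ⟨p.chain, q.chain, ?_⟩
    intro x hx y hy
    rw [List.getLast?_eq_getLast p.ne] at hx
    rw [List.head?_eq_head q.ne] at hy
    obtain rfl : p.edges.getLast p.ne = x := by simpa using hx
    obtain rfl : q.edges.head q.ne = y := by simpa using hy
    exact h
  · simp [GPath.label]
  · simp only [GPath.source]
    rw [List.head_append]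
    simp [p.ne]
  · simp only [GPath.range]
    rw [List.getLast_append]
    simp [q.ne]

/-- splitting a path at position `k`, `0 < k < length` -/
lemma GPath.split (p : GPath G) (k : ℕ) (h1 : 0 < k) (h2 : k < p.edges.length) :
    ∃ q r : GPath G, q.label L = (p.label L).take k ∧ r.label L = (p.label L).drop k ∧
      q.source = p.source ∧ r.range = p.range ∧ q.range = r.source := by
  have htd : p.edges.take k ++ p.edges.drop k = p.edges := List.take_append_drop k p.edges
  have hc := p.chain
  rw [← htd] at hc
  simp only [List.Chain', List.isChain_append] at hc
  have htne : p.edges.take k ≠ [] := by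
    have : (p.edges.take k).length = k := by
      rw [List.length_take]; omega
    intro h; rw [h] at this; simp at this; omega
  have hdne : p.edges.drop k ≠ [] := by
    have : (p.edges.drop k).length = p.edges.length - k := by simp
    intro h; rw [h] at this; simp at this; omega
  refine ⟨⟨p.edges.take k, htne, hc.1⟩, ⟨p.edges.drop k, hdne, hc.2.1⟩, ?_, ?_, ?_, ?_, ?_⟩
  · simp [GPath.label, List.map_take]
  · simp [GPath.label, List.map_drop]
  · simp only [GPath.source]
    rw [List.head_take]
  · simp only [GPath.range]
    rw [List.getLast_drop]
  · simp only [GPath.range, GPath.source]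
    exact hc.2.2 _ (by simp [List.getLast?_eq_getLast htne]) _
      (by simp [List.head?_eq_head hdne])

end AuxPaths

section AuxSets

variable {V E 𝒜 : Type*} {G : DirGraph V E} {L : E → 𝒜}

lemma relRng_subset_rngW (A : Set V) (w : List 𝒜) :
    relRng G L A w ⊆ rngW G L w := fun _ ⟨p, h1, _, h3⟩ => ⟨p, h1, h3⟩

lemma relRng_univ (w : List 𝒜) : relRng G L (Set.univ : Set V) w = rngW G L w := by
  ext v
  exact ⟨fun ⟨p, h1, _, h3⟩ => ⟨p, h1, h3⟩, fun ⟨p, h1, h3⟩ => ⟨p, h1, trivial, h3⟩⟩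

lemma relRng_mono {A B : Set V} (h : A ⊆ B) (w : List 𝒜) :
    relRng G L A w ⊆ relRng G L B w := fun _ ⟨p, h1, h2, h3⟩ => ⟨p, h1, h h2, h3⟩

lemma relRng_append (A : Set V) {v w : List 𝒜} (hv : v ≠ []) (hw : w ≠ []) :
    relRng G L A (v ++ w) = relRng G L (relRng G L A v) w := by
  ext x
  constructor
  · rintro ⟨p, h1, h2, h3⟩
    have hlen : v.length < p.edges.length := by
      have := p.label_length (L := L)
      rw [h1] at this
      simp at this
      have : 0 < w.length := List.length_pos_iff.mpr hw
      omega
    obtain ⟨q, r, hq, hr, hqs, hrr, hqr⟩ := p.split (L := L) v.length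
      (List.length_pos_iff.mpr hv) hlen
    rw [h1] at hq hr
    simp at hq hr
    exact ⟨r, hr, ⟨q, hq, hqs ▸ h2, hqr⟩, hrr ▸ h3⟩
  · rintro ⟨r, hr, ⟨q, hq, hqA, hqr⟩, hrx⟩
    obtain ⟨m, hm1, hm2, hm3⟩ := q.comp (L := L) r hqr
    exact ⟨m, by rw [hm1, hq, hr], hm2 ▸ hqA, hm3 ▸ hrx⟩

lemma relRng_cons (A : Set V) (a : 𝒜) {w : List 𝒜} (hw : w ≠ []) :
    relRng G L A (a :: w) = relRng G L (relRng G L A [a]) w := by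
  have := relRng_append (G := G) (L := L) A (v := [a]) (w := w) (by simp) hw
  simpa using this

lemma rngW_cons (a : 𝒜) {w : List 𝒜} (hw : w ≠ []) :
    rngW G L (a :: w) = relRng G L (rngW G L [a]) w := by
  rw [← relRng_univ, relRng_cons _ _ hw, relRng_univ]

lemma relRng_sinks_empty {C : Set V} (hC : C ⊆ G.sinks) (w : List 𝒜) :
    relRng G L C w = ∅ := by
  ext v
  simp only [Set.mem_empty_iff_false, iff_false]
  rintro ⟨p, _, h2, _⟩
  exact hC h2 (p.edges.head p.ne) rfl

lemma isLabelWord_of_prefix {v w : List 𝒜} (hvw : v <+: w) (hv : v ≠ [])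
    (hw : IsLabelWord G L w) : IsLabelWord G L v := by
  obtain ⟨p, hp⟩ := hw
  obtain ⟨t, rfl⟩ := hvw
  rcases eq_or_ne t [] with rfl | ht
  · exact ⟨p, by simpa using hp⟩
  · have hlen : v.length < p.edges.length := by
      have := p.label_length (L := L)
      rw [hp] at this
      have : v.length + t.length = p.edges.length := by simpa using this
      have ht' : 0 < t.length := List.length_pos_iff.mpr ht
      omega
    obtain ⟨q, r, hq, -, -, -, -⟩ := p.split (L := L) v.length (List.length_pos_iff.mpr hv) hlen
    rw [hp] at hq
    simp at hq
    exact ⟨q, hq⟩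

/-- prefix path of a path from `A`: nonempty relative range and label word. -/
lemma relRng_take_nonempty {A : Set V} {p : GPath G} (hp : p.source ∈ A) (k : ℕ)
    (h1 : 0 < k) (h2 : k ≤ p.edges.length) :
    (relRng G L A ((p.label L).take k)).Nonempty := by
  rcases eq_or_lt_of_le h2 with heq | hlt
  · refine ⟨p.range, p, ?_, hp, rfl⟩
    rw [List.take_of_length_le]
    rw [p.label_length, heq]
  · obtain ⟨q, r, hq, -, hqs, -, -⟩ := p.split (L := L) k h1 hlt
    exact ⟨q.range, q, hq, hqs ▸ hp, rfl⟩

/-- divergence of a non-prefix -/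
lemma exists_divergence {β γ : List 𝒜} (h : ¬ β <+: γ) (hlen : β.length ≤ γ.length) :
    ∃ j, ∃ (hj : j < β.length) (hj' : j < γ.length),
      β.take j = γ.take j ∧ β[j] ≠ γ[j] := by
  induction β generalizing γ with
  | nil => exact absurd (List.nil_prefix) h
  | cons b β' ih =>
    cases γ with
    | nil => simp at hlen
    | cons c γ' =>
      rcases eq_or_ne b c with rfl | hbc
      · have h' : ¬ β' <+: γ' := fun hh => h (List.cons_prefix_cons.mpr ⟨rfl, hh⟩)
        obtain ⟨j, hj, hj', h1, h2⟩ := ih h' (by simpa using hlen)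
        exact ⟨j + 1, by simpa using hj, by simpa using hj', by simp [h1], by simpa using h2⟩
      · exact ⟨0, by simp, by simp, by simp, by simpa using hbc⟩

end AuxSets

section AuxRep
set_option linter.unusedSectionVars false

variable {V E 𝒜 : Type*} {B : Type*} [NonUnitalRing B] [StarRing B]
  {G : DirGraph V E} {L : E → 𝒜} (rep : LRep G L B)

lemma sWord_cons (s : 𝒜 → B) (a : 𝒜) {w : List 𝒜} (hw : w ≠ []) :
    sWord s (a :: w) = s a * sWord s w := by
  cases w with
  | nil => exact absurd rfl hw
  | cons b w' => rfl

lemma bbar_relRng_letter (hL : Function.Surjective L) {A : Set V}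
    (hA : Bbar G L A) (a : 𝒜) : Bbar G L (relRng G L A [a]) :=
  Bbar.rel A [a] hA (isLabelWord_single hL a)

/-- `p A * s_w = s_w * p (r(A, w))` -/
lemma LRep.p_sWord (hL : Function.Surjective L) {A : Set V} (hA : Bbar G L A)
    {w : List 𝒜} (hw : w ≠ []) :
    rep.p A * sWord rep.s w = sWord rep.s w * rep.p (relRng G L A w) := by
  induction w generalizing A with
  | nil => exact absurd rfl hw
  | cons a w' ih =>
    cases w' with
    | nil => exact rep.p_s A a hA
    | cons b w'' =>
      have hne : (b :: w'') ≠ [] := by simp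
      rw [sWord_cons rep.s a hne, ← mul_assoc, rep.p_s A a hA, mul_assoc,
        ih (bbar_relRng_letter hL hA a) hne, ← mul_assoc,
        ← sWord_cons rep.s a hne, relRng_cons A a hne]


/-- `s_w* s_w = p (r(w))` for a label word `w`. -/
lemma LRep.sWord_star_self (hL : Function.Surjective L) {w : List 𝒜}
    (hw : IsLabelWord G L w) :
    star (sWord rep.s w) * sWord rep.s w = rep.p (rngW G L w) := by
  obtain ⟨p, hp⟩ := hw
  induction w generalizing p with
  | nil => exact absurd hp p.label_ne
  | cons a w' ih =>
    cases w' with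
    | nil => exact rep.s_s a
    | cons b w'' =>
      have hne : (b :: w'') ≠ [] := by simp
      -- tail path
      have hlen : 1 < p.edges.length := by
        have := p.label_length (L := L)
        rw [hp] at this
        simp at this
        omega
      obtain ⟨-, r, -, hr, -, -, -⟩ := p.split (L := L) 1 one_pos hlen
      rw [hp] at hr
      simp at hr
      have hBa : Bbar G L (rngW G L [a]) := Bbar.base [a] (isLabelWord_single hL a)
      have hBw : Bbar G L (rngW G L (b :: w'')) := Bbar.base _ ⟨r, hr⟩
      have hBrel : Bbar G L (relRng G L (rngW G L [a]) (b :: w'')) :=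
        Bbar.rel _ _ hBa ⟨r, hr⟩
      rw [sWord_cons rep.s a hne, star_mul, mul_assoc, ← mul_assoc (star (rep.s a)),
        ← mul_assoc (star (sWord rep.s (b :: w''))), rep.s_s a,
        mul_assoc (star (sWord rep.s (b :: w''))),
        rep.p_sWord hL hBa hne, ← mul_assoc, ih r hr,
        rep.p_mul _ _ hBw hBrel,
        Set.inter_eq_right.mpr (relRng_subset_rngW _ _), rngW_cons a hne]

lemma LRep.p_mul_of_subset {A C : Set V} (hA : Bbar G L A) (hC : Bbar G L C)
    (h : A ⊆ C) : rep.p A * rep.p C = rep.p A := by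
  rw [rep.p_mul A C hA hC, Set.inter_eq_left.mpr h]

end AuxRep

section AuxEngine
set_option linter.unusedSectionVars false

variable {V E 𝒜 : Type*} {B : Type*} [NonUnitalRing B] [StarRing B]
  {G : DirGraph V E} {L : E → 𝒜} (rep : LRep G L B)

lemma isLabelWord_drop {w : List 𝒜} (hw : IsLabelWord G L w) {k : ℕ} (hk : k < w.length) :
    IsLabelWord G L (w.drop k) := by
  rcases Nat.eq_zero_or_pos k with rfl | hkpos
  · simpa using hw
  · obtain ⟨p, hp⟩ := hw
    have hlen : k < p.edges.length := by
      rw [← p.label_length (L := L), hp]; exact hk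
    obtain ⟨-, r, -, hr, -, -, -⟩ := p.split (L := L) k hkpos hlen
    rw [hp] at hr
    exact ⟨r, hr⟩

lemma isLabelWord_take {w : List 𝒜} (hw : IsLabelWord G L w) {k : ℕ} (hk1 : 0 < k) :
    IsLabelWord G L (w.take k) := by
  rcases eq_or_ne w [] with rfl | hne
  · simpa using hw
  · refine isLabelWord_of_prefix (List.take_prefix k w) ?_ hw
    intro h
    have h1 : (w.take k).length = min k w.length := List.length_take
    have h2 : 0 < w.length := List.length_pos_iff.mpr hne
    rw [h] at h1
    simp at h1
    omega

/-- conjugation step: from `p X = s_{aw} q s_{aw}*` deduce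
`p (r(X,a)) = s_w q s_w*`. -/
lemma LRep.engine (hL : Function.Surjective L) {A X : Set V} (hA : Bbar G L A)
    (hX : Bbar G L X) (a : 𝒜) {w : List 𝒜} (hw : w ≠ []) (hwlw : IsLabelWord G L w)
    (hq1 : rep.p X = sWord rep.s (a :: w) * (rep.p A * star (sWord rep.s (a :: w))))
    (hsub : A ⊆ relRng G L (rngW G L [a]) w) :
    rep.p (relRng G L X [a]) = sWord rep.s w * (rep.p A * star (sWord rep.s w)) := by
  set q := rep.p A with hqdef
  set S := sWord rep.s w with hSdef
  have hqq : q * q = q := by rw [hqdef, rep.p_mul A A hA hA, Set.inter_self]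
  have hBpa : Bbar G L (rngW G L [a]) := Bbar.base [a] (isLabelWord_single hL a)
  have hBrel : Bbar G L (relRng G L (rngW G L [a]) w) := Bbar.rel _ _ hBpa hwlw
  have h0 : rep.p (rngW G L [a]) * (S * q) = S * q := by
    rw [← mul_assoc, hSdef, rep.p_sWord hL hBpa hw, mul_assoc, ← hSdef,
      rep.p_mul _ _ hBrel hA, Set.inter_eq_right.mpr hsub]
  have h1 : ∀ z : B, rep.p (rngW G L [a]) * (S * (q * z)) = S * (q * z) := by
    intro z
    have := congrArg (· * z) h0
    simpa only [mul_assoc] using this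
  have h2 : q * (star S * rep.p (rngW G L [a])) = q * star S := by
    have := congrArg star h0
    simpa only [star_mul, mul_assoc, rep.p_sa _ hBpa, rep.p_sa _ hA,
      show star q = q from rep.p_sa _ hA] using this
  have hDsub : relRng G L X [a] ⊆ rngW G L [a] := relRng_subset_rngW _ _
  have hBD : Bbar G L (relRng G L X [a]) := bbar_relRng_letter hL hX a
  have step1 : rep.p (relRng G L X [a]) = star (rep.s a) * (rep.p X * rep.s a) := by
    rw [rep.p_s X a hX, ← mul_assoc, rep.s_s a,
      rep.p_mul _ _ hBpa hBD, Set.inter_eq_right.mpr hDsub]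
  rw [step1, hq1, sWord_cons rep.s a hw, ← hSdef]
  calc star (rep.s a) * (rep.s a * S * (q * star (rep.s a * S)) * rep.s a)
      = rep.p (rngW G L [a]) * (S * (q * (star S * (rep.p (rngW G L [a]))))) := by
        simp only [star_mul, mul_assoc, ← rep.s_s a]
    _ = rep.p (rngW G L [a]) * (S * ((q * q) * (star S * (rep.p (rngW G L [a]))))) := by
        rw [hqq]
    _ = rep.p (rngW G L [a]) * (S * (q * (q * star S))) := by
        simp only [mul_assoc]
        rw [h2]
    _ = S * (q * (q * star S)) := h1 _
    _ = S * (q * star S) := by rw [← mul_assoc q q, hqq]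

/-- last conjugation step -/
lemma LRep.engine_last (hL : Function.Surjective L) {A X : Set V} (hA : Bbar G L A)
    (hX : Bbar G L X) (a : 𝒜)
    (hq1 : rep.p X = rep.s a * (rep.p A * star (rep.s a)))
    (hsub : A ⊆ rngW G L [a]) :
    rep.p (relRng G L X [a]) = rep.p A := by
  set q := rep.p A with hqdef
  have hBpa : Bbar G L (rngW G L [a]) := Bbar.base [a] (isLabelWord_single hL a)
  have hDsub : relRng G L X [a] ⊆ rngW G L [a] := relRng_subset_rngW _ _
  have hBD : Bbar G L (relRng G L X [a]) := bbar_relRng_letter hL hX a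
  have hqp : q * rep.p (rngW G L [a]) = q := rep.p_mul_of_subset hA hBpa hsub
  have hpq : rep.p (rngW G L [a]) * q = q := by
    rw [hqdef, rep.p_mul _ _ hBpa hA, Set.inter_eq_right.mpr hsub]
  have step1 : rep.p (relRng G L X [a]) = star (rep.s a) * (rep.p X * rep.s a) := by
    rw [rep.p_s X a hX, ← mul_assoc, rep.s_s a,
      rep.p_mul _ _ hBpa hBD, Set.inter_eq_right.mpr hDsub]
  rw [step1, hq1]
  calc star (rep.s a) * (rep.s a * (q * star (rep.s a)) * rep.s a)
      = rep.p (rngW G L [a]) * (q * rep.p (rngW G L [a])) := by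
        simp only [mul_assoc, ← rep.s_s a]
    _ = q := by rw [hqp, hpq]

/-- orthogonality: from `p X = s_{aw} q s_{aw}*` and `b ≠ a`, `p (r(X,b)) = 0`. -/
lemma LRep.orth (hL : Function.Surjective L) {A X : Set V} (hA : Bbar G L A)
    (hX : Bbar G L X) (a b : 𝒜) (hab : b ≠ a) {w : List 𝒜}
    (hq1 : rep.p X = sWord rep.s (a :: w) * (rep.p A * star (sWord rep.s (a :: w)))) :
    rep.p (relRng G L X [b]) = 0 := by
  have hBpb : Bbar G L (rngW G L [b]) := Bbar.base [b] (isLabelWord_single hL b)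
  have hDsub : relRng G L X [b] ⊆ rngW G L [b] := relRng_subset_rngW _ _
  have hBD : Bbar G L (relRng G L X [b]) := bbar_relRng_letter hL hX b
  have hzero : ∀ z : B, star (rep.s b) * (sWord rep.s (a :: w) * z) = 0 := by
    intro z
    cases w with
    | nil =>
      show star (rep.s b) * (rep.s a * z) = 0
      rw [← mul_assoc, rep.s_orth b a hab, zero_mul]
    | cons c w' =>
      rw [sWord_cons rep.s a (by simp), mul_assoc, ← mul_assoc,
        rep.s_orth b a hab, zero_mul]
  have step1 : rep.p (relRng G L X [b]) = star (rep.s b) * (rep.p X * rep.s b) := by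
    rw [rep.p_s X b hX, ← mul_assoc, rep.s_s b,
      rep.p_mul _ _ hBpb hBD, Set.inter_eq_right.mpr hDsub]
  rw [step1, hq1]
  simp only [mul_assoc]
  exact hzero _

/-- sinks die: from `p X = s_{aw} q s_{aw}*` and `C ⊆ X ∩ sinks`, `p C = 0`. -/
lemma LRep.sinkzero (hL : Function.Surjective L) {A X C : Set V} (hA : Bbar G L A)
    (hX : Bbar G L X) (hC : Bbar G L C) (hCX : C ⊆ X) (hCs : C ⊆ G.sinks)
    (a : 𝒜) {w : List 𝒜}
    (hq1 : rep.p X = sWord rep.s (a :: w) * (rep.p A * star (sWord rep.s (a :: w)))) :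
    rep.p C = 0 := by
  have h := rep.p_sWord hL hC (show (a :: w) ≠ [] by simp)
  rw [relRng_sinks_empty hCs, rep.p_empty, mul_zero] at h
  have hzero : ∀ z : B, rep.p C * (sWord rep.s (a :: w) * z) = 0 := by
    intro z
    rw [← mul_assoc, h, zero_mul]
  calc rep.p C = rep.p C * rep.p X := (rep.p_mul_of_subset hC hX hCX).symm
    _ = rep.p C * (sWord rep.s (a :: w) * (rep.p A * star (sWord rep.s (a :: w)))) := by
        rw [hq1]
    _ = 0 := hzero _

end AuxEngine
/-- Proposition 3.5. Let `{s_a, p_A}` be a representation of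
`(E, L, 𝔅̄)` in a C*-algebra with `p_C ≠ 0` for every nonempty `C ∈ 𝔅̄`. If
`α` is a loop at `A ∈ 𝔅̄` with an exit, then `p_A` is an infinite
projection. -/
theorem loop_with_exit_infinite_projection {V E 𝒜 B : Type*}
    [Countable V] [Countable E] [Countable 𝒜]
    [NonUnitalCStarAlgebra B] [PartialOrder B] [StarOrderedRing B]
    (G : DirGraph V E) (L : E → 𝒜) (hL : Function.Surjective L)
    (sa : StandingAssumptions G L)
    (rep : LRep G L B)
    (hp : ∀ C : Set V, Bbar G L C → C.Nonempty → rep.p C ≠ 0)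
    (A : Set V) (hA : Bbar G L A) (α : List 𝒜)
    (hloop : IsLoop G L A α) (hexit : HasExitLoop G L A α) :
    IsInfiniteProjection B (rep.p A) := by
  obtain ⟨⟨pα, hplab, hpsrc, hprng⟩, hAR⟩ := hloop
  have hαlw : IsLabelWord G L α := ⟨pα, hplab⟩
  have hαne : α ≠ [] := hplab ▸ pα.label_ne
  have hn1 : 1 ≤ α.length := List.length_pos_iff.mpr hαne
  set n := α.length with hn
  set q := rep.p A with hqdef
  set sα := sWord rep.s α with hsαdef
  set R := relRng G L A α with hRdef
  have hBR : Bbar G L R := Bbar.rel A α hA hαlw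
  have hBrng : Bbar G L (rngW G L α) := Bbar.base α hαlw
  have hRsub : R ⊆ rngW G L α := relRng_subset_rngW A α
  have hArng : A ⊆ rngW G L α := fun v hv => hRsub (hAR hv)
  have hqsa : star q = q := rep.p_sa A hA
  have hqq : q * q = q := by rw [hqdef, rep.p_mul A A hA hA, Set.inter_self]
  have hps : q * sα = sα * rep.p R := rep.p_sWord hL hA hαne
  have hss : star sα * sα = rep.p (rngW G L α) := rep.sWord_star_self hL hαlw
  have hq_rng : q * rep.p (rngW G L α) = q := rep.p_mul_of_subset hA hBrng hArng
  have hrng_q : rep.p (rngW G L α) * q = q := by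
    rw [hqdef, rep.p_mul _ _ hBrng hA, Set.inter_eq_right.mpr hArng]
  have hstaru : star (sα * q) = q * star sα := by rw [star_mul, hqsa]
  have huu : star (sα * q) * (sα * q) = q := by
    rw [hstaru, mul_assoc, ← mul_assoc (star sα), hss, hrng_q, hqq]
  set e := sα * (q * star sα) with hedef
  have he : (sα * q) * star (sα * q) = e := by
    rw [hstaru, mul_assoc, ← mul_assoc q q, hqq, hedef]
  have hestar : star e = e := by
    rw [hedef]
    simp only [star_mul, hqsa, star_star, mul_assoc]
  have hqe : q * e = e := by
    rw [hedef, ← mul_assoc, hps, mul_assoc, ← mul_assoc (rep.p R),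
      rep.p_mul _ _ hBR hA, Set.inter_eq_right.mpr hAR, ← hqdef]
  have heq2 : e * q = e := by
    have h := congrArg star hqe
    rw [star_mul, hqsa, hestar] at h
    exact h
  have hee : e * e = e := by
    rw [hedef]
    simp only [mul_assoc]
    rw [← mul_assoc (star sα) sα, hss, ← mul_assoc (rep.p (rngW G L α)), hrng_q,
      ← mul_assoc q q, hqq]
  have hle : e ≤ q := by
    have hs : star (q - e) * (q - e) = q - e := by
      rw [star_sub, hqsa, hestar, sub_mul, mul_sub, mul_sub, hqq, hqe, heq2, hee]
      abel
    have h0 : (0 : B) ≤ q - e := hs ▸ star_mul_self_nonneg (q - e)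
    exact sub_nonneg.mp h0
  refine ⟨hqsa, hqq, sα * q, huu, he ▸ hle, ?_⟩
  rw [he]
  intro hcon
  -- `hcon : e = q`; derive a contradiction from the exit hypothesis
  have heqq' : q = sα * (q * star sα) := hcon.symm
  have hPR : rep.p R = q := by
    have w1 : star sα * (q * sα) = rep.p R := by
      rw [hps, ← mul_assoc, hss, rep.p_mul _ _ hBrng hBR, Set.inter_eq_right.mpr hRsub]
    have w2 : star sα * (q * sα) = q := by
      conv_lhs => rw [heqq']
      calc star sα * (sα * (q * star sα) * sα)
          = (star sα * sα) * (q * (star sα * sα)) := by simp only [mul_assoc]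
        _ = rep.p (rngW G L α) * (q * rep.p (rngW G L α)) := by rw [hss]
        _ = q := by rw [hq_rng, hrng_q]
    rw [← w1, w2]
  -- suffix lemmas
  have sufA : ∀ i (hi : i + 1 < n),
      A ⊆ relRng G L (rngW G L [α[i]]) (α.drop (i + 1)) := by
    intro i hi v hv
    obtain ⟨p, hlab, hsrc, hrng⟩ := hAR hv
    have hplen : p.edges.length = n := by
      rw [← p.label_length (L := L), hlab]
    obtain ⟨p1, p2, h1lab, h2lab, h1s, h2r, h12⟩ :=
      p.split (L := L) (i + 1) (Nat.succ_pos i) (by omega)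
    rw [hlab] at h1lab h2lab
    have hlast : (p1.label L).getLast p1.label_ne = α[i] := by
      rw [List.getLast_eq_getElem]
      simp only [h1lab]
      rw [List.getElem_take]
      congr 1
      rw [List.length_take]
      omega
    have hmem : p1.range ∈ rngW G L [α[i]] := by
      have := p1.range_mem_rngW_last (L := L)
      rwa [hlast] at this
    exact ⟨p2, h2lab, h12 ▸ hmem, h2r ▸ hrng⟩
  have sufB : ∀ i (hi : i < n) (hi2 : i + 1 = n), A ⊆ rngW G L [α[i]] := by
    intro i hi hi2 v hv
    obtain ⟨p, hlab, hsrc, hrng⟩ := hAR hv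
    have hlast : (p.label L).getLast p.label_ne = α[i] := by
      rw [List.getLast_eq_getElem]
      simp only [hlab]
      congr 1
      omega
    have := p.range_mem_rngW_last (L := L)
    rw [hlast, hrng] at this
    exact this
  -- the key inductive identity
  have key : ∀ k, 1 ≤ k → k < n →
      rep.p (relRng G L A (α.take k)) =
        sWord rep.s (α.drop k) * (q * star (sWord rep.s (α.drop k))) := by
    intro k hk1
    induction k, hk1 using Nat.le_induction with
    | base =>
      intro h1n
      have h0 : 0 < n := by omega
      have hcons0 : α[0] :: α.drop 1 = α := by
        have := List.getElem_cons_drop (as := α) (i := 0) h0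
        rwa [List.drop_zero] at this
      have htake1 : α.take 1 = [α[0]] := by
        rw [List.take_succ, List.take_zero, List.getElem?_eq_getElem h0]
        rfl
      have hw : α.drop 1 ≠ [] := by
        intro h
        have := List.length_drop (i := 1) (l := α)
        rw [h] at this
        simp at this
        omega
      have hwlw : IsLabelWord G L (α.drop 1) := isLabelWord_drop hαlw (by omega)
      have hq1 : rep.p A = sWord rep.s (α[0] :: α.drop 1) *
          (rep.p A * star (sWord rep.s (α[0] :: α.drop 1))) := by
        rw [hcons0, ← hqdef, ← hsαdef]
        exact heqq'
      rw [htake1]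
      exact rep.engine hL hA hA α[0] hw hwlw hq1 (sufA 0 h1n)
    | succ k hk ih =>
      intro hk1n
      have hkn : k < n := by omega
      have hq1 := ih hkn
      have hconsk : α[k] :: α.drop (k + 1) = α.drop k := List.getElem_cons_drop (as := α) (i := k) hkn
      have htakek : α.take (k + 1) = α.take k ++ [α[k]] := by
        rw [List.take_succ, List.getElem?_eq_getElem hkn]
        rfl
      have htkne : α.take k ≠ [] := by
        intro h
        have := List.length_take (i := k) (l := α)
        rw [h] at this
        simp at this
        omega
      have hw : α.drop (k + 1) ≠ [] := by
        intro h
        have := List.length_drop (i := k + 1) (l := α)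
        rw [h] at this
        simp at this
        omega
      have hwlw : IsLabelWord G L (α.drop (k + 1)) := isLabelWord_drop hαlw (by omega)
      have hBX : Bbar G L (relRng G L A (α.take k)) :=
        Bbar.rel A _ hA (isLabelWord_take hαlw (by omega))
      rw [← hconsk] at hq1
      rw [htakek, relRng_append A htkne (by simp)]
      exact rep.engine hL hA hBX α[k] hw hwlw hq1 (sufA k hk1n)
  -- now the three exit cases
  rcases hexit with hex | hex | hex
  · -- case (i): a path label from `A` that is not an initial segment of `α`
    obtain ⟨β, hβmem, hβnotin⟩ := Set.exists_of_ssubset hex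
    obtain ⟨p, hpsrc', hplen', hplab'⟩ := hβmem
    have hβne : β ≠ [] := hplab' ▸ p.label_ne
    have hβnp : ¬ β <+: α := fun h => hβnotin ⟨hβne, h⟩
    have hβlen : β.length ≤ n := by
      rw [← hplab', p.label_length]
      exact hplen'
    obtain ⟨j, hjβ, hjα, hdiv, hne⟩ := exists_divergence hβnp hβlen
    set b := β[j] with hbdef
    -- the set `D = r(A, β_{[1,j+1]})` is nonempty and in `𝔅̄`, but `p D = 0`
    have hplen2 : β.length = p.edges.length := by
      rw [← hplab', p.label_length]
    have hDne : (relRng G L A (β.take (j + 1))).Nonempty := by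
      have := relRng_take_nonempty (L := L) hpsrc' (j + 1) (Nat.succ_pos j) (by omega)
      rwa [hplab'] at this
    have hβtlw : IsLabelWord G L (β.take (j + 1)) :=
      isLabelWord_take ⟨p, hplab'⟩ (Nat.succ_pos j)
    have hBD : Bbar G L (relRng G L A (β.take (j + 1))) := Bbar.rel A _ hA hβtlw
    have htakeβ : β.take (j + 1) = β.take j ++ [b] := by
      rw [List.take_succ, List.getElem?_eq_getElem hjβ]
      rfl
    have hDzero : rep.p (relRng G L A (β.take (j + 1))) = 0 := by
      rcases Nat.eq_zero_or_pos j with rfl | hjpos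
      · -- j = 0
        have htake1 : β.take 1 = [b] := by simpa using htakeβ
        have hcons0 : α[0] :: α.drop 1 = α := by
          have := List.getElem_cons_drop (as := α) (i := 0) (by omega)
          rwa [List.drop_zero] at this
        have hq1 : rep.p A = sWord rep.s (α[0] :: α.drop 1) *
            (rep.p A * star (sWord rep.s (α[0] :: α.drop 1))) := by
          rw [hcons0, ← hqdef, ← hsαdef]
          exact heqq'
        rw [htake1]
        exact rep.orth hL hA hA α[0] b hne hq1
      · -- j ≥ 1
        have hq1 := key j hjpos hjα
        have hconsj : α[j] :: α.drop (j + 1) = α.drop j := List.getElem_cons_drop (as := α) (i := j) hjα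
        rw [← hconsj] at hq1
        have htkne : α.take j ≠ [] := by
          intro h
          have := List.length_take (i := j) (l := α)
          rw [h] at this
          simp at this
          omega
        have hBX : Bbar G L (relRng G L A (α.take j)) :=
          Bbar.rel A _ hA (isLabelWord_take hαlw hjpos)
        rw [htakeβ, hdiv, relRng_append A htkne (by simp)]
        exact rep.orth hL hA hBX α[j] b hne hq1
    exact hp _ hBD hDne hDzero
  · -- case (ii): a sink in some `r(A, α_{[1,k]})`
    obtain ⟨k, hk1, hkn, hCne⟩ := hex
    have hBAk : Bbar G L (relRng G L A (α.take k)) :=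
      Bbar.rel A _ hA (isLabelWord_take hαlw (by omega))
    have hBC : Bbar G L (relRng G L A (α.take k) ∩ G.sinks) := Bbar.sk _ hBAk
    rcases eq_or_lt_of_le hkn with hkeq | hklt
    · -- k = n : the set is R ∩ sinks
      have htaken : α.take k = α := by
        rw [hkeq, List.take_of_length_le (le_of_eq hn.symm)]
      rw [htaken] at hCne hBAk hBC
      have hcons0 : α[0] :: α.drop 1 = α := by
        have := List.getElem_cons_drop (as := α) (i := 0) (by omega)
        rwa [List.drop_zero] at this
      have hq1 : rep.p R = sWord rep.s (α[0] :: α.drop 1) *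
          (rep.p A * star (sWord rep.s (α[0] :: α.drop 1))) := by
        rw [hcons0, ← hqdef, ← hsαdef, hPR]
        exact heqq'
      have hzero : rep.p (R ∩ G.sinks) = 0 :=
        rep.sinkzero hL hA hBR hBC Set.inter_subset_left
          Set.inter_subset_right α[0] hq1
      exact hp _ hBC hCne hzero
    · -- k < n
      have hq1 := key k hk1 hklt
      have hconsk : α[k] :: α.drop (k + 1) = α.drop k := List.getElem_cons_drop (as := α) (i := k) hklt
      rw [← hconsk] at hq1
      have hzero : rep.p (relRng G L A (α.take k) ∩ G.sinks) = 0 :=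
        rep.sinkzero hL hA hBAk hBC Set.inter_subset_left
          Set.inter_subset_right α[k] hq1
      exact hp _ hBC hCne hzero
  · -- case (iii): `A ⊊ r(A, α)`
    obtain ⟨x, hxR, hxA⟩ := Set.exists_of_ssubset hex
    have hBdiff : Bbar G L (R \ A) := Bbar.diff R A hBR hA
    have hdu : (R \ A) ∪ A = R := Set.diff_union_of_subset hAR
    have hdi : R \ A ∩ A = ∅ := Set.diff_inter_self
    have hpu := rep.p_union (R \ A) A hBdiff hA
    rw [hdu, hdi, rep.p_empty, hPR, ← hqdef, sub_zero] at hpu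
    exact hp (R \ A) hBdiff ⟨x, hxR, hxA⟩ (right_eq_add.mp hpu)

end
end
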